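/- (Wasserstein distance separates measures) Let (E, ρ) be a complete separable (Polish) metric space with its Borel σ-algebra and let p ≥ 1. If μ and ν are probability measures on E with W_p^ρ(μ,ν) = 0, i.e. inf_{π ∈ C(μ,ν)} ∫_{E×E} ρ(x,y)^p dπ(x,y) = 0, then μ = ν. -/

import Mathlib

open MeasureTheory Metric Filter Topology ENNReal

lemma wass_aux_le {E : Type*} [MetricSpace E] [TopologicalSpace.SeparableSpace E] [MeasurableSpace E] [BorelSpace E]
    (p : ℝ) (hp : 1 ≤ p)
    (μ ν : Measure E) [IsProbabilityMeasure μ] [IsProbabilityMeasure ν]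
    (hc : ∀ δ : ℝ≥0∞, 0 < δ → ∃ π : Measure (E × E), π.map Prod.fst = μ ∧
      π.map Prod.snd = ν ∧ ∫⁻ z, ENNReal.ofReal (dist z.1 z.2 ^ p) ∂π < δ)
    (F : Set E) (hF : IsClosed F) : μ F ≤ ν F := by
  haveI : SecondCountableTopology E := UniformSpace.secondCountable_of_separable E
  have hp0 : 0 ≤ p := le_trans zero_le_one hp
  have step : ∀ ε : ℝ, 0 < ε → μ F ≤ ν (cthickening ε F) + ENNReal.ofReal ε := by
    intro ε hε
    have hεp : (0:ℝ) < ε ^ p := Real.rpow_pos_of_pos hε p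
    obtain ⟨π, h1, h2, hcost⟩ := hc (ENNReal.ofReal ε * ENNReal.ofReal (ε ^ p))
      (ENNReal.mul_pos (ENNReal.ofReal_pos.mpr hε).ne' (ENNReal.ofReal_pos.mpr hεp).ne')
    have hmeas : Measurable fun z : E × E => ENNReal.ofReal (dist z.1 z.2 ^ p) :=
      (ENNReal.continuous_ofReal.comp ((continuous_dist.comp
        (continuous_fst.prodMk continuous_snd)).rpow_const
        (fun z => Or.inr hp0))).measurable
    set bad : Set (E × E) := {z | ENNReal.ofReal (ε ^ p) ≤ ENNReal.ofReal (dist z.1 z.2 ^ p)}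
    have hbad : π bad < ENNReal.ofReal ε := by
      have hmul := mul_meas_ge_le_lintegral₀ hmeas.aemeasurable (ENNReal.ofReal (ε ^ p)) (μ := π)
      have hlt : ENNReal.ofReal (ε ^ p) * π bad < ENNReal.ofReal (ε ^ p) * ENNReal.ofReal ε := by
        calc ENNReal.ofReal (ε ^ p) * π bad ≤ _ := hmul
          _ < ENNReal.ofReal ε * ENNReal.ofReal (ε ^ p) := hcost
          _ = ENNReal.ofReal (ε ^ p) * ENNReal.ofReal ε := mul_comm _ _
      exact (ENNReal.mul_lt_mul_iff_right (by simpa using hεp) ENNReal.ofReal_ne_top).mp hlt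
    have hsub : Prod.fst ⁻¹' F ⊆ Prod.snd ⁻¹' cthickening ε F ∪ bad := by
      rintro ⟨x, y⟩ hx
      by_cases hy : y ∈ cthickening ε F
      · exact Or.inl hy
      · refine Or.inr ?_
        have hd : ε ≤ dist x y := by
          by_contra hlt
          push_neg at hlt
          exact hy (mem_cthickening_of_dist_le y x ε F hx (by rw [dist_comm]; linarith))
        exact ENNReal.ofReal_le_ofReal (Real.rpow_le_rpow hε.le hd hp0)
    calc μ F = π (Prod.fst ⁻¹' F) := by
          rw [← h1, Measure.map_apply measurable_fst hF.measurableSet]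
      _ ≤ π (Prod.snd ⁻¹' cthickening ε F ∪ bad) := measure_mono hsub
      _ ≤ π (Prod.snd ⁻¹' cthickening ε F) + π bad := measure_union_le _ _
      _ ≤ ν (cthickening ε F) + ENNReal.ofReal ε := by
          rw [← h2, Measure.map_apply measurable_snd isClosed_cthickening.measurableSet]
          exact add_le_add le_rfl hbad.le
  -- take the limit ε → 0⁺
  have hT : Tendsto (fun ε : ℝ => ν (cthickening ε F) + ENNReal.ofReal ε) (𝓝[>] 0)
      (𝓝 (ν F)) := by
    have h1 : Tendsto (fun ε : ℝ => ν (cthickening ε F)) (𝓝 0) (𝓝 (ν F)) :=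
      tendsto_measure_cthickening_of_isClosed ⟨1, one_pos, measure_ne_top _ _⟩ hF
    have h2 : Tendsto (fun ε : ℝ => ENNReal.ofReal ε) (𝓝 0) (𝓝 0) := by
      simpa using ENNReal.continuous_ofReal.tendsto 0
    have := h1.add h2
    simpa using this.mono_left nhdsWithin_le_nhds
  refine ge_of_tendsto hT ?_
  filter_upwards [self_mem_nhdsWithin] with ε hε using step ε hε

theorem eq_of_wasserstein_eq_zero {E : Type*} [MetricSpace E] [CompleteSpace E]
    [TopologicalSpace.SeparableSpace E] [MeasurableSpace E] [BorelSpace E]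
    (p : ℝ) (hp : 1 ≤ p)
    (μ ν : Measure E) [IsProbabilityMeasure μ] [IsProbabilityMeasure ν]
    (h : (⨅ π : {π : Measure (E × E) // π.map Prod.fst = μ ∧ π.map Prod.snd = ν},
        ∫⁻ z, ENNReal.ofReal (dist z.1 z.2 ^ p) ∂π.1) = 0) :
    μ = ν := by
  haveI : SecondCountableTopology E := UniformSpace.secondCountable_of_separable E
  have hc : ∀ δ : ℝ≥0∞, 0 < δ → ∃ π : Measure (E × E), π.map Prod.fst = μ ∧
      π.map Prod.snd = ν ∧ ∫⁻ z, ENNReal.ofReal (dist z.1 z.2 ^ p) ∂π < δ := by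
    intro δ hδ
    rw [← h] at hδ
    obtain ⟨⟨π, h1, h2⟩, hπ⟩ := iInf_lt_iff.mp hδ
    exact ⟨π, h1, h2, hπ⟩
  have hc' : ∀ δ : ℝ≥0∞, 0 < δ → ∃ π : Measure (E × E), π.map Prod.fst = ν ∧
      π.map Prod.snd = μ ∧ ∫⁻ z, ENNReal.ofReal (dist z.1 z.2 ^ p) ∂π < δ := by
    intro δ hδ
    obtain ⟨π, h1, h2, hcost⟩ := hc δ hδ
    refine ⟨π.map Prod.swap, ?_, ?_, ?_⟩
    · rw [Measure.map_map measurable_fst measurable_swap]; simpa [Function.comp_def] using h2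
    · rw [Measure.map_map measurable_snd measurable_swap]; simpa [Function.comp_def] using h1
    · rw [lintegral_map ?_ measurable_swap]
      · simpa [dist_comm] using hcost
      · exact (ENNReal.continuous_ofReal.comp ((continuous_dist.comp
          (continuous_fst.prodMk continuous_snd)).rpow_const
          (fun z => Or.inr (le_trans zero_le_one hp)))).measurable
  have key : ∀ F : Set E, IsClosed F → μ F = ν F := by
    intro F hF
    refine le_antisymm (wass_aux_le p hp μ ν hc F hF) (wass_aux_le p hp ν μ hc' F hF)
  apply ext_of_generate_finite _ ?_ isPiSystem_isClosed ?_ (by simp [key _ isClosed_univ])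
  · rw [BorelSpace.measurable_eq (α := E), borel_eq_generateFrom_isClosed]
  · exact fun s hs => key s hs
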